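/- For n ≥ 3 with n ≡ 2 (mod 4), the cycle C_n has no color-blind distinguishing 2-edge-coloring, but has a color-blind distinguishing 3-edge-coloring; that is, dal(C_n) = 3. -/

import Mathlib

open Finset

/-- The color-blind partition of `v`: the multiset of (nonzero) counts of incident
edges of each color, i.e. the partition of `deg v` with trailing zeroes removed. -/
def cbp {V : Type*} [Fintype V] [DecidableEq V] (G : SimpleGraph V) [DecidableRel G.Adj]
    {k : ℕ} (c : Sym2 V → Fin k) (v : V) : Multiset ℕ :=
  (((Finset.univ : Finset (Fin k)).val.map fun i =>
    ((G.neighborFinset v).filter fun w => c s(v, w) = i).card).filter fun m => m ≠ 0)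

/-- `c` is a color-blind distinguishing edge-coloring of `G`. -/
def IsCBD {V : Type*} [Fintype V] [DecidableEq V] (G : SimpleGraph V) [DecidableRel G.Adj]
    {k : ℕ} (c : Sym2 V → Fin k) : Prop :=
  ∀ u v : V, G.Adj u v → cbp G c u ≠ cbp G c v

/-- The cycle `C_n` on vertex set `Fin n` (for `n ≥ 3`). -/
def cycleGraph (n : ℕ) : SimpleGraph (Fin n) where
  Adj p q := p ≠ q ∧ ((p.val + 1) % n = q.val ∨ (q.val + 1) % n = p.val)
  symm := ⟨fun p q h => ⟨h.1.symm, h.2.symm⟩⟩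
  loopless := ⟨fun p h => h.1 rfl⟩

instance (n : ℕ) : DecidableRel (cycleGraph n).Adj := fun p q =>
  inferInstanceAs (Decidable (p ≠ q ∧ ((p.val + 1) % n = q.val ∨ (q.val + 1) % n = p.val)))




-- successor/pred on Fin n via explicit arithmetic
def fsucc {n : ℕ} (v : Fin n) : Fin n := ⟨(v.val + 1) % n, Nat.mod_lt _ (Nat.zero_lt_of_lt v.isLt)⟩
def fpred {n : ℕ} (v : Fin n) : Fin n :=
  ⟨if v.val = 0 then n - 1 else v.val - 1, by have := v.isLt; split <;> omega⟩

lemma mod_succ_eq {n x : ℕ} (hx : x < n) : (x + 1) % n = if x + 1 = n then 0 else x + 1 := by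
  split
  · next h => rw [h, Nat.mod_self]
  · exact Nat.mod_eq_of_lt (by omega)

lemma fsucc_val {n : ℕ} (v : Fin n) : (fsucc v).val = if v.val + 1 = n then 0 else v.val + 1 := by
  simp only [fsucc]; exact mod_succ_eq v.isLt

lemma fpred_fsucc {n : ℕ} (hn : 3 ≤ n) (v : Fin n) : fpred (fsucc v) = v := by
  have hv := v.isLt
  apply Fin.ext
  simp only [fpred, fsucc_val]
  split <;> split <;> omega

lemma fsucc_fpred {n : ℕ} (hn : 3 ≤ n) (v : Fin n) : fsucc (fpred v) = v := by
  have hv := v.isLt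
  apply Fin.ext
  rw [fsucc_val]
  simp only [fpred]
  split <;> split <;> omega

lemma succ_cond_iff {n : ℕ} (hn : 3 ≤ n) (v w : Fin n) :
    (v.val + 1) % n = w.val ↔ w = fsucc v := by
  rw [Fin.ext_iff]; simp only [fsucc]; exact eq_comm

lemma pred_cond_iff {n : ℕ} (hn : 3 ≤ n) (v w : Fin n) :
    (w.val + 1) % n = v.val ↔ w = fpred v := by
  constructor
  · intro h
    have := fpred_fsucc hn w
    rw [show fsucc w = v from Fin.ext (by rw [fsucc_val]; rw [mod_succ_eq w.isLt] at h; exact h)] at this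
    exact this.symm
  · intro h
    subst h
    have := congrArg Fin.val (fsucc_fpred hn v)
    rw [fsucc_val] at this
    rw [mod_succ_eq (fpred v).isLt]
    exact this

lemma adj_iff {n : ℕ} (hn : 3 ≤ n) (v w : Fin n) :
    (cycleGraph n).Adj v w ↔ w = fpred v ∨ w = fsucc v := by
  have hv := v.isLt
  constructor
  · rintro ⟨hne, h | h⟩
    · right; exact (succ_cond_iff hn v w).1 h
    · left; exact (pred_cond_iff hn v w).1 h
  · rintro (h | h) <;> subst h
    · refine ⟨?_, Or.inr ((pred_cond_iff hn v (fpred v)).2 rfl)⟩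
      intro h
      have := congrArg Fin.val h
      simp only [fpred] at this
      split at this <;> omega
    · refine ⟨?_, Or.inl ((succ_cond_iff hn v (fsucc v)).2 rfl)⟩
      intro h
      have := congrArg Fin.val h
      rw [fsucc_val] at this
      split at this <;> omega

lemma fpred_ne_fsucc {n : ℕ} (hn : 3 ≤ n) (v : Fin n) : fpred v ≠ fsucc v := by
  have hv := v.isLt
  intro h
  have := congrArg Fin.val h
  rw [fsucc_val] at this
  simp only [fpred] at this
  split at this <;> split at this <;> omega

lemma nbhd {n : ℕ} (hn : 3 ≤ n) (v : Fin n) :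
    (cycleGraph n).neighborFinset v = {fpred v, fsucc v} := by
  ext w
  rw [SimpleGraph.mem_neighborFinset, adj_iff hn, mem_insert, mem_singleton]

lemma count_pair {V : Type*} [DecidableEq V] {k : ℕ} (a b : V) (hab : a ≠ b)
    (f : V → Fin k) (i : Fin k) :
    (({a, b} : Finset V).filter (fun w => f w = i)).card =
      (if f a = i then 1 else 0) + (if f b = i then 1 else 0) := by
  rw [filter_insert, filter_singleton]
  by_cases h1 : f a = i <;> by_cases h2 : f b = i <;>
    simp [h1, h2, hab, Finset.card_insert_of_notMem]

lemma filt2 : ∀ x y : Fin 2,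
    ((((univ : Finset (Fin 2)).val.map fun i =>
      (if x = i then 1 else 0) + (if y = i then 1 else 0)).filter fun m => m ≠ 0)) =
      if x = y then {2} else ({1, 1} : Multiset ℕ) := by decide

lemma filt3 : ∀ x y : Fin 3,
    ((((univ : Finset (Fin 3)).val.map fun i =>
      (if x = i then 1 else 0) + (if y = i then 1 else 0)).filter fun m => m ≠ 0)) =
      if x = y then {2} else ({1, 1} : Multiset ℕ) := by decide

lemma cbp_pair {V : Type*} [Fintype V] [DecidableEq V] (G : SimpleGraph V) [DecidableRel G.Adj]
    {k : ℕ} (c : Sym2 V → Fin k) (v a b : V) (hN : G.neighborFinset v = {a, b}) (hab : a ≠ b)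
    (hk : ∀ x y : Fin k,
      ((((univ : Finset (Fin k)).val.map fun i =>
        (if x = i then 1 else 0) + (if y = i then 1 else 0)).filter fun m => m ≠ 0)) =
        if x = y then {2} else ({1, 1} : Multiset ℕ)) :
    cbp G c v = if c s(v, a) = c s(v, b) then {2} else ({1, 1} : Multiset ℕ) := by
  unfold cbp
  rw [hN]
  have hcong : ∀ i : Fin k, (({a, b} : Finset V).filter (fun w => c s(v, w) = i)).card =
      (if c s(v, a) = i then 1 else 0) + (if c s(v, b) = i then 1 else 0) :=
    fun i => count_pair a b hab (fun w => c s(v, w)) i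
  simp only [hcong]
  exact hk _ _

lemma cbp_cycle {n : ℕ} (hn : 3 ≤ n) {k : ℕ} (c : Sym2 (Fin n) → Fin k)
    (hk : ∀ x y : Fin k,
      ((((univ : Finset (Fin k)).val.map fun i =>
        (if x = i then 1 else 0) + (if y = i then 1 else 0)).filter fun m => m ≠ 0)) =
        if x = y then {2} else ({1, 1} : Multiset ℕ)) (v : Fin n) :
    cbp (cycleGraph n) c v =
      if c s(v, fpred v) = c s(v, fsucc v) then {2} else ({1, 1} : Multiset ℕ) :=
  cbp_pair _ c v _ _ (nbhd hn v) (fpred_ne_fsucc hn v) hk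

open Fin.NatCast Fin.CommRing in
lemma no_two_coloring (n : ℕ) (h3 : 3 ≤ n) (h4 : n % 4 = 2) :
    ¬ ∃ c : Sym2 (Fin n) → Fin 2, IsCBD (cycleGraph n) c := by
  rintro ⟨c, hc⟩
  have hn0 : 0 < n := by omega
  set Vt : ℕ → Fin n := fun i => ⟨i % n, Nat.mod_lt _ hn0⟩ with hVt
  set t : ℕ → Fin 2 := fun i => c s(Vt i, Vt (i + 1)) with ht
  have hsucc : ∀ i, Vt (i + 1) = fsucc (Vt i) := by
    intro i
    apply Fin.ext
    simp only [hVt, fsucc]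
    exact (Nat.mod_add_mod i n 1).symm
  have hpred : ∀ i, Vt i = fpred (Vt (i + 1)) := by
    intro i
    rw [hsucc i, fpred_fsucc h3]
  -- cbp at Vt (i+1)
  have hcbp : ∀ i, cbp (cycleGraph n) c (Vt (i + 1)) =
      if t i = t (i + 1) then {2} else ({1, 1} : Multiset ℕ) := by
    intro i
    rw [cbp_cycle h3 c filt2 (Vt (i + 1)), ← hpred i, ← hsucc (i + 1)]
    have e1 : s(Vt (i + 1), Vt i) = s(Vt i, Vt (i + 1)) := Sym2.eq_swap
    rw [e1]
  -- adjacency of consecutive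
  have hadj : ∀ i, (cycleGraph n).Adj (Vt i) (Vt (i + 1)) := by
    intro i
    rw [adj_iff h3]
    right
    exact hsucc i
  -- step: t (i+2) = t i + 1
  have hstep : ∀ i, t (i + 2) = t i + 1 := by
    intro i
    have hne := hc _ _ (hadj (i + 1))
    rw [hcbp i, show i + 1 + 1 = i + 2 from rfl, hcbp (i + 1)] at hne
    have key : ∀ x y : Fin 2, x ≠ y → y = x + 1 := by decide
    by_cases h1 : t i = t (i + 1) <;> by_cases h2 : t (i + 1) = t (i + 2)
    · simp [h1, h2] at hne
    · rw [h1]; exact key _ _ h2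
    · rw [← h2]; exact key _ _ h1
    · simp [h1, h2] at hne
  have hind : ∀ j, t (2 * j) = t 0 + (j : Fin 2) := by
    intro j
    induction j with
    | zero => simp
    | succ j ih =>
      have : 2 * (j + 1) = 2 * j + 2 := by ring
      rw [this, hstep (2 * j), ih]
      push_cast
      ring
  have hper : t n = t 0 := by
    have h1 : Vt n = Vt 0 := by apply Fin.ext; simp [hVt]
    have h2 : Vt (n + 1) = Vt 1 := by
      apply Fin.ext; simp only [hVt]; exact Nat.add_mod_left n 1
    simp only [ht, h1, h2]
  obtain ⟨l, hl⟩ : ∃ l, n = 2 * (2 * l + 1) := ⟨n / 4, by omega⟩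
  have := hind (2 * l + 1)
  rw [← hl, hper, left_eq_add] at this
  have h0 := congrArg Fin.val this
  rw [Fin.val_natCast] at h0
  simp only [Fin.val_zero] at h0
  omega

def fcol (m j : ℕ) : Fin 3 := if j = m - 1 then 2 else if j % 2 = 0 then 0 else 1
def hcol (m i : ℕ) : Fin 3 := fcol m (((i + 1) / 2) % m)

def gfun (n : ℕ) (u w : Fin n) : Fin 3 :=
  if (u.val + 1) % n = w.val then hcol (n / 2) u.val
  else if (w.val + 1) % n = u.val then hcol (n / 2) w.val else 0

lemma not_both {n : ℕ} (hn : 3 ≤ n) (u w : Fin n)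
    (c1 : (u.val + 1) % n = w.val) (c2 : (w.val + 1) % n = u.val) : False := by
  have hu := u.isLt; have hw := w.isLt
  rw [mod_succ_eq u.isLt] at c1
  rw [mod_succ_eq w.isLt] at c2
  split at c1 <;> split at c2 <;> omega

lemma gfun_symm {n : ℕ} (hn : 3 ≤ n) (u w : Fin n) : gfun n u w = gfun n w u := by
  unfold gfun
  by_cases c1 : (u.val + 1) % n = w.val <;> by_cases c2 : (w.val + 1) % n = u.val
  · exact absurd c2 (fun h => not_both hn u w c1 h)
  · simp [c1, c2]
  · simp [c1, c2]
  · simp [c1, c2]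

lemma fin3_parity_ne : ∀ a b : ℕ, a % 2 ≠ b % 2 →
    (if a % 2 = 0 then (0 : Fin 3) else 1) ≠ (if b % 2 = 0 then (0 : Fin 3) else 1) := by
  intro a b h
  rcases Nat.mod_two_eq_zero_or_one a with ha | ha <;> rcases Nat.mod_two_eq_zero_or_one b with hb | hb
  · exact absurd (ha.trans hb.symm) h
  · simp only [ha, hb, if_pos, if_neg]; decide
  · simp only [ha, hb]; norm_num
  · exact absurd (ha.trans hb.symm) h

lemma hcol_key (m : ℕ) (hm : 2 ≤ m) (i : ℕ) (hi : i < 2 * m) :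
    (hcol m (if i = 0 then 2 * m - 1 else i - 1) = hcol m i) ↔ i % 2 = 0 := by
  unfold hcol
  rcases Nat.eq_zero_or_pos i with h0 | h0
  · subst h0
    rw [if_pos rfl]
    have e1 : (2 * m - 1 + 1) / 2 = m := by omega
    have e2 : (0 + 1) / 2 = 0 := by norm_num
    rw [e1, e2, Nat.mod_self, Nat.zero_mod]
    simp
  · rw [if_neg (by omega)]
    have e1 : (i - 1 + 1) = i := by omega
    rw [e1]
    by_cases hev : i % 2 = 0
    · have e2 : i / 2 = (i + 1) / 2 := by omega
      rw [e2]
      simp [hev]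
    · have hj : i / 2 < m := by omega
      have e2 : (i + 1) / 2 = i / 2 + 1 := by omega
      rw [e2, Nat.mod_eq_of_lt hj]
      simp only [hev, iff_false]
      set j := i / 2 with hjd
      rcases eq_or_lt_of_le (Nat.succ_le_of_lt hj) with hlast | hmid
      · -- j + 1 = m
        have : (j + 1) % m = 0 := by rw [show j + 1 = m by omega, Nat.mod_self]
        rw [this]
        unfold fcol
        rw [if_pos (by omega), if_neg (by omega), if_pos (by norm_num)]
        decide
      · have : (j + 1) % m = j + 1 := Nat.mod_eq_of_lt hmid
        rw [this]
        unfold fcol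
        rw [if_neg (by omega)]
        by_cases hl : j + 1 = m - 1
        · rw [if_pos hl]
          split <;> decide
        · rw [if_neg hl]
          exact fin3_parity_ne j (j + 1) (by omega)

lemma exists_three_coloring (n : ℕ) (h3 : 3 ≤ n) (h4 : n % 4 = 2) :
    ∃ c : Sym2 (Fin n) → Fin 3, IsCBD (cycleGraph n) c := by
  set m := n / 2 with hm
  have hnm : n = 2 * m := by omega
  have hm2 : 2 ≤ m := by omega
  refine ⟨Sym2.lift ⟨gfun n, gfun_symm h3⟩, ?_⟩
  set c : Sym2 (Fin n) → Fin 3 := Sym2.lift ⟨gfun n, gfun_symm h3⟩ with hcdef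
  have color_succ : ∀ v : Fin n, c s(v, fsucc v) = hcol m v.val := by
    intro v
    rw [hcdef, Sym2.lift_mk]
    show gfun n v (fsucc v) = hcol m v.val
    unfold gfun
    rw [if_pos (show (v.val + 1) % n = (fsucc v).val from rfl)]
  have color_pred : ∀ v : Fin n, c s(v, fpred v) = hcol m (fpred v).val := by
    intro v
    rw [hcdef, Sym2.lift_mk]
    show gfun n v (fpred v) = hcol m (fpred v).val
    unfold gfun
    rw [if_neg, if_pos]
    · exact congrArg Fin.val (fsucc_fpred h3 v)
    · intro h
      exact fpred_ne_fsucc h3 v (Fin.ext h.symm)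
  have hcbp : ∀ v : Fin n, cbp (cycleGraph n) c v =
      if v.val % 2 = 0 then {2} else ({1, 1} : Multiset ℕ) := by
    intro v
    rw [cbp_cycle h3 c filt3 v, color_succ, color_pred]
    have hv := v.isLt
    have hpredval : (fpred v).val = if v.val = 0 then 2 * m - 1 else v.val - 1 := by
      simp only [fpred, hnm]
    rw [hpredval]
    by_cases hp : v.val % 2 = 0
    · rw [if_pos ((hcol_key m hm2 v.val (by omega)).2 hp), if_pos hp]
    · rw [if_neg (fun h => hp ((hcol_key m hm2 v.val (by omega)).1 h)), if_neg hp]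
  intro u v hadj
  rw [hcbp u, hcbp v]
  have hpar : u.val % 2 ≠ v.val % 2 := by
    have hu := u.isLt; have hw := v.isLt
    rcases ((adj_iff h3 u v).1 hadj) with h | h <;> subst h
    · simp only [fpred]
      split <;> omega
    · rw [fsucc_val]
      split <;> omega
  by_cases hp : u.val % 2 = 0
  · rw [if_pos hp, if_neg (by omega)]
    decide
  · rw [if_neg hp, if_pos (by omega)]
    decide


theorem cycle_two_mod_four_dal_eq_three (n : ℕ) (h3 : 3 ≤ n) (h4 : n % 4 = 2) :
    (¬ ∃ c : Sym2 (Fin n) → Fin 2, IsCBD (cycleGraph n) c) ∧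
    (∃ c : Sym2 (Fin n) → Fin 3, IsCBD (cycleGraph n) c) :=
  ⟨no_two_coloring n h3 h4, exists_three_coloring n h3 h4⟩
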